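/- Let A be a commutative ring that is also a ℚ-algebra, and let D₁, D₂ : A → A be two derivations with D₁ ∘ D₂ = D₂ ∘ D₁. For f, g ∈ A and m ∈ ℕ define the m-th Moyal term B_m(f,g) := Σ_{k₁+k₂=m} ((−1)^{k₂}/(2^m · k₁! · k₂!)) · (D₁^{k₁} D₂^{k₂} f) · (D₁^{k₂} D₂^{k₁} g) ∈ A, and define the Moyal star product ⋆ on the formal power series ring A[[t]] by declaring that for f = Σ_p f_p t^p and g = Σ_q g_q t^q, the n-th coefficient of f ⋆ g is Σ_{p+q+m=n} B_m(f_p, g_q). Then the Moyal star product is associative: for all f, g, h ∈ A[[t]], (f ⋆ g) ⋆ h = f ⋆ (g ⋆ h). -/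

import Mathlib

set_option synthInstance.maxHeartbeats 400000
set_option maxHeartbeats 1600000


open Finset

/-- The `m`-th term of the Moyal star product built from two derivations `D₁, D₂`:
`B_m(f,g) = ∑_{k₁+k₂=m} ((-1)^{k₂}/(2^m k₁! k₂!)) (D₁^{k₁} D₂^{k₂} f) (D₁^{k₂} D₂^{k₁} g)`. -/
noncomputable def moyalTerm {A : Type*} [CommRing A] [Algebra ℚ A]
    (D₁ D₂ : Derivation ℚ A A) (m : ℕ) (f g : A) : A :=
  ∑ k ∈ Finset.HasAntidiagonal.antidiagonal m,
    (((-1 : ℚ) ^ k.2 / (2 ^ m * k.1.factorial * k.2.factorial)) •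
      ((⇑D₁)^[k.1] ((⇑D₂)^[k.2] f) * (⇑D₁)^[k.2] ((⇑D₂)^[k.1] g)))

/-- The Moyal star product on `A⟦t⟧`: the `n`-th coefficient of `f ⋆ g` is
`∑_{p+q+m=n} B_m(f_p, g_q)`. -/
noncomputable def moyalStar {A : Type*} [CommRing A] [Algebra ℚ A]
    (D₁ D₂ : Derivation ℚ A A) (f g : PowerSeries A) : PowerSeries A :=
  PowerSeries.mk fun n =>
    ∑ am ∈ Finset.HasAntidiagonal.antidiagonal n, ∑ pq ∈ Finset.HasAntidiagonal.antidiagonal am.1,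
      moyalTerm D₁ D₂ am.2 (PowerSeries.coeff (R := A) pq.1 f) (PowerSeries.coeff (R := A) pq.2 g)


namespace MoyalAssocAux
open TensorProduct LinearMap


lemma binom_smul {R : Type*} [Ring R] [Algebra ℚ R] {u v : R} (huv : Commute u v) (N : ℕ) :
    ∑ mn ∈ antidiagonal N, (((mn.1.factorial : ℚ) * mn.2.factorial)⁻¹ • (v ^ mn.2 * u ^ mn.1))
      = ((N.factorial : ℚ))⁻¹ • (u + v) ^ N := by
  rw [huv.add_pow, Finset.smul_sum, Finset.Nat.sum_antidiagonal_eq_sum_range_succ_mk]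
  refine Finset.sum_congr rfl fun k hk => ?_
  rw [Finset.mem_range, Nat.lt_succ_iff] at hk
  have h0 : u ^ k * v ^ (N - k) * (N.choose k : R)
      = (N.choose k : ℚ) • (v ^ (N - k) * u ^ k) := by
    rw [(huv.pow_pow k (N - k)).eq,
      (Nat.cast_commute (N.choose k) (v ^ (N - k) * u ^ k)).symm.eq, ← nsmul_eq_mul]
    exact (Nat.cast_smul_eq_nsmul ℚ _ _).symm
  rw [h0, smul_smul]
  congr 1
  rw [Nat.cast_choose ℚ hk]
  have h2 : (k.factorial : ℚ) ≠ 0 := Nat.cast_ne_zero.mpr (Nat.factorial_ne_zero _)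
  have h3 : ((N - k).factorial : ℚ) ≠ 0 := Nat.cast_ne_zero.mpr (Nat.factorial_ne_zero _)
  have h1 : (N.factorial : ℚ) ≠ 0 := Nat.cast_ne_zero.mpr (Nat.factorial_ne_zero _)
  field_simp


variable {A : Type*} [CommRing A] [Algebra ℚ A]

noncomputable def Qop (D₁ D₂ : Derivation ℚ A A) : A ⊗[ℚ] A →ₗ[ℚ] A ⊗[ℚ] A :=
  TensorProduct.map D₁.toLinearMap D₂.toLinearMap
    - TensorProduct.map D₂.toLinearMap D₁.toLinearMap

noncomputable def E1 (f : A →ₗ[ℚ] A) :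
    A ⊗[ℚ] (A ⊗[ℚ] A) →ₗ[ℚ] A ⊗[ℚ] (A ⊗[ℚ] A) := rTensor (A ⊗[ℚ] A) f
noncomputable def E2 (f : A →ₗ[ℚ] A) :
    A ⊗[ℚ] (A ⊗[ℚ] A) →ₗ[ℚ] A ⊗[ℚ] (A ⊗[ℚ] A) := lTensor A (rTensor A f)
noncomputable def E3 (f : A →ₗ[ℚ] A) :
    A ⊗[ℚ] (A ⊗[ℚ] A) →ₗ[ℚ] A ⊗[ℚ] (A ⊗[ℚ] A) := lTensor A (lTensor A f)

lemma cE1E2 (f g : A →ₗ[ℚ] A) : Commute (E1 f) (E2 g) := by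
  unfold Commute SemiconjBy E1 E2
  rw [Module.End.mul_eq_comp, Module.End.mul_eq_comp, rTensor_comp_lTensor, lTensor_comp_rTensor]

lemma cE1E3 (f g : A →ₗ[ℚ] A) : Commute (E1 f) (E3 g) := by
  unfold Commute SemiconjBy E1 E3
  rw [Module.End.mul_eq_comp, Module.End.mul_eq_comp, rTensor_comp_lTensor, lTensor_comp_rTensor]

lemma cE2E3 (f g : A →ₗ[ℚ] A) : Commute (E2 f) (E3 g) := by
  unfold Commute SemiconjBy E2 E3
  rw [Module.End.mul_eq_comp, Module.End.mul_eq_comp, ← lTensor_comp, ← lTensor_comp,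
    rTensor_comp_lTensor, lTensor_comp_rTensor]

lemma cE1 (f g : A →ₗ[ℚ] A) (h : f ∘ₗ g = g ∘ₗ f) : Commute (E1 f) (E1 g) := by
  unfold Commute SemiconjBy E1
  rw [Module.End.mul_eq_comp, Module.End.mul_eq_comp, ← rTensor_comp, ← rTensor_comp, h]

lemma cE2 (f g : A →ₗ[ℚ] A) (h : f ∘ₗ g = g ∘ₗ f) : Commute (E2 f) (E2 g) := by
  unfold Commute SemiconjBy E2
  rw [Module.End.mul_eq_comp, Module.End.mul_eq_comp, ← lTensor_comp, ← lTensor_comp, ← rTensor_comp, ← rTensor_comp, h]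

lemma cE3 (f g : A →ₗ[ℚ] A) (h : f ∘ₗ g = g ∘ₗ f) : Commute (E3 f) (E3 g) := by
  unfold Commute SemiconjBy E3
  rw [Module.End.mul_eq_comp, Module.End.mul_eq_comp, ← lTensor_comp, ← lTensor_comp, ← lTensor_comp, ← lTensor_comp, h]

noncomputable def Q12 (D₁ D₂ : Derivation ℚ A A) :
    A ⊗[ℚ] (A ⊗[ℚ] A) →ₗ[ℚ] A ⊗[ℚ] (A ⊗[ℚ] A) :=
  E1 D₁.toLinearMap * E2 D₂.toLinearMap - E1 D₂.toLinearMap * E2 D₁.toLinearMap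

noncomputable def Q13 (D₁ D₂ : Derivation ℚ A A) :
    A ⊗[ℚ] (A ⊗[ℚ] A) →ₗ[ℚ] A ⊗[ℚ] (A ⊗[ℚ] A) :=
  E1 D₁.toLinearMap * E3 D₂.toLinearMap - E1 D₂.toLinearMap * E3 D₁.toLinearMap

noncomputable def Q23 (D₁ D₂ : Derivation ℚ A A) :
    A ⊗[ℚ] (A ⊗[ℚ] A) →ₗ[ℚ] A ⊗[ℚ] (A ⊗[ℚ] A) :=
  lTensor A (Qop D₁ D₂)

lemma Q23_eq (D₁ D₂ : Derivation ℚ A A) :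
    Q23 D₁ D₂ = E2 D₁.toLinearMap * E3 D₂.toLinearMap - E2 D₂.toLinearMap * E3 D₁.toLinearMap := by
  unfold Q23 Qop E2 E3
  rw [lTensor_sub, Module.End.mul_eq_comp, Module.End.mul_eq_comp, ← lTensor_comp, ← lTensor_comp,
    rTensor_comp_lTensor, rTensor_comp_lTensor]


lemma comm_sub_sub {R : Type*} [Ring R] {a b c d e f g h : R}
    (hae : Commute a e) (haf : Commute a f) (hag : Commute a g) (hah : Commute a h)
    (hbe : Commute b e) (hbf : Commute b f) (hbg : Commute b g) (hbh : Commute b h)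
    (hce : Commute c e) (hcf : Commute c f) (hcg : Commute c g) (hch : Commute c h)
    (hde : Commute d e) (hdf : Commute d f) (hdg : Commute d g) (hdh : Commute d h) :
    Commute (a * b - c * d) (e * f - g * h) :=
  (((hae.mul_right haf).mul_left (hbe.mul_right hbf)).sub_right
    ((hag.mul_right hah).mul_left (hbg.mul_right hbh))).sub_left
    (((hce.mul_right hcf).mul_left (hde.mul_right hdf)).sub_right
      ((hcg.mul_right hch).mul_left (hdg.mul_right hdh)))

section

variable (D₁ D₂ : Derivation ℚ A A)

lemma d_comm' (hcomm : ∀ a : A, D₁ (D₂ a) = D₂ (D₁ a)) : (D₁.toLinearMap ∘ₗ D₂.toLinearMap : A →ₗ[ℚ] A)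
    = D₂.toLinearMap ∘ₗ D₁.toLinearMap := by
  ext a; exact hcomm a

lemma commQ1213 (hcomm : ∀ a : A, D₁ (D₂ a) = D₂ (D₁ a)) : Commute (Q12 D₁ D₂) (Q13 D₁ D₂) := by
  unfold Q12 Q13
  exact comm_sub_sub (R := Module.End ℚ (A ⊗[ℚ] (A ⊗[ℚ] A)))
    (Commute.refl _) (cE1E3 _ _) (cE1 _ _ (d_comm' D₁ D₂ hcomm)) (cE1E3 _ _)
    ((cE1E2 _ _).symm) (cE2E3 _ _) ((cE1E2 _ _).symm) (cE2E3 _ _)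
    (cE1 _ _ (d_comm' D₁ D₂ hcomm).symm) (cE1E3 _ _) (Commute.refl _) (cE1E3 _ _)
    ((cE1E2 _ _).symm) (cE2E3 _ _) ((cE1E2 _ _).symm) (cE2E3 _ _)

lemma commQ1223 (hcomm : ∀ a : A, D₁ (D₂ a) = D₂ (D₁ a)) : Commute (Q12 D₁ D₂) (Q23 D₁ D₂) := by
  rw [Q23_eq]
  unfold Q12
  exact comm_sub_sub (R := Module.End ℚ (A ⊗[ℚ] (A ⊗[ℚ] A)))
    (cE1E2 _ _) (cE1E3 _ _) (cE1E2 _ _) (cE1E3 _ _)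
    (cE2 _ _ (d_comm' D₁ D₂ hcomm).symm) (cE2E3 _ _) (Commute.refl _) (cE2E3 _ _)
    (cE1E2 _ _) (cE1E3 _ _) (cE1E2 _ _) (cE1E3 _ _)
    (Commute.refl _) (cE2E3 _ _) (cE2 _ _ (d_comm' D₁ D₂ hcomm)) (cE2E3 _ _)

lemma commQ1323 (hcomm : ∀ a : A, D₁ (D₂ a) = D₂ (D₁ a)) : Commute (Q13 D₁ D₂) (Q23 D₁ D₂) := by
  rw [Q23_eq]
  unfold Q13
  exact comm_sub_sub (R := Module.End ℚ (A ⊗[ℚ] (A ⊗[ℚ] A)))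
    (cE1E2 _ _) (cE1E3 _ _) (cE1E2 _ _) (cE1E3 _ _)
    ((cE2E3 _ _).symm) (Commute.refl _) ((cE2E3 _ _).symm) (cE3 _ _ (d_comm' D₁ D₂ hcomm).symm)
    (cE1E2 _ _) (cE1E3 _ _) (cE1E2 _ _) (cE1E3 _ _)
    ((cE2E3 _ _).symm) (cE3 _ _ (d_comm' D₁ D₂ hcomm)) ((cE2E3 _ _).symm) (Commute.refl _)

end

section
variable (D₁ D₂ : Derivation ℚ A A)

lemma ext3 {M : Type*} [AddCommMonoid M] [Module ℚ M]
    {g h : A ⊗[ℚ] (A ⊗[ℚ] A) →ₗ[ℚ] M}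
    (H : ∀ a b c : A, g (a ⊗ₜ[ℚ] (b ⊗ₜ[ℚ] c)) = h (a ⊗ₜ[ℚ] (b ⊗ₜ[ℚ] c))) : g = h := by
  have h2 : g ∘ₗ (TensorProduct.assoc ℚ A A A).toLinearMap
      = h ∘ₗ (TensorProduct.assoc ℚ A A A).toLinearMap :=
    TensorProduct.ext_threefold fun a b c => by simpa using H a b c
  refine LinearMap.ext fun x => ?_
  have h3 := congrArg (fun (F : (A ⊗[ℚ] A) ⊗[ℚ] A →ₗ[ℚ] M) =>
    F ((TensorProduct.assoc ℚ A A A).symm x)) h2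
  simpa using h3

noncomputable def Phi : A ⊗[ℚ] (A ⊗[ℚ] A) →ₗ[ℚ] A ⊗[ℚ] A := lTensor A (LinearMap.mul' ℚ A)

noncomputable def Psi : A ⊗[ℚ] (A ⊗[ℚ] A) →ₗ[ℚ] A ⊗[ℚ] A :=
  rTensor A (LinearMap.mul' ℚ A) ∘ₗ (TensorProduct.assoc ℚ A A A).symm.toLinearMap

lemma muPsiPhi : LinearMap.mul' ℚ A ∘ₗ Psi (A := A) = LinearMap.mul' ℚ A ∘ₗ Phi (A := A) := by
  refine ext3 fun a b c => ?_
  simp [Psi, Phi, mul_assoc]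

lemma leibPsi : Qop D₁ D₂ ∘ₗ Psi = Psi ∘ₗ (Q13 D₁ D₂ + Q23 D₁ D₂) := by
  refine ext3 fun a b c => ?_
  simp only [Qop, Psi, Q13, Q23, Q23_eq, E1, E2, E3, LinearMap.comp_apply, LinearMap.add_apply,
    LinearMap.sub_apply, Module.End.mul_apply, LinearEquiv.coe_coe, TensorProduct.assoc_symm_tmul,
    rTensor_tmul, lTensor_tmul, TensorProduct.map_tmul, LinearMap.mul'_apply,
    Derivation.coeFn_coe, Derivation.leibniz, smul_eq_mul, TensorProduct.tmul_sub,
    TensorProduct.sub_tmul, TensorProduct.tmul_add, TensorProduct.add_tmul, map_sub, map_add]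
  simp only [mul_comm]
  abel

lemma leibPhi : Qop D₁ D₂ ∘ₗ Phi = Phi ∘ₗ (Q12 D₁ D₂ + Q13 D₁ D₂) := by
  refine ext3 fun a b c => ?_
  simp only [Qop, Phi, Q12, Q13, E1, E2, E3, LinearMap.comp_apply, LinearMap.add_apply,
    LinearMap.sub_apply, Module.End.mul_apply, rTensor_tmul, lTensor_tmul,
    TensorProduct.map_tmul, LinearMap.mul'_apply, Derivation.coeFn_coe, Derivation.leibniz,
    smul_eq_mul, TensorProduct.tmul_sub, TensorProduct.sub_tmul, TensorProduct.tmul_add,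
    TensorProduct.add_tmul, map_sub, map_add]
  simp only [mul_comm]
  abel

lemma comp_pow {M N : Type*} [AddCommGroup M] [AddCommGroup N] [Module ℚ M] [Module ℚ N]
    (L : M →ₗ[ℚ] M) (P : N →ₗ[ℚ] N) (S : N →ₗ[ℚ] M) (hcomp : L ∘ₗ S = S ∘ₗ P) (n : ℕ) :
    (L ^ n) ∘ₗ S = S ∘ₗ (P ^ n) := by
  induction n with
  | zero => simp [Module.End.one_eq_id]
  | succ k ih =>
    rw [pow_succ', pow_succ', Module.End.mul_eq_comp, Module.End.mul_eq_comp, LinearMap.comp_assoc, ih,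
      ← LinearMap.comp_assoc, hcomp, LinearMap.comp_assoc]

lemma Q12_conj : Q12 D₁ D₂ = (TensorProduct.assoc ℚ A A A).toLinearMap
    ∘ₗ rTensor A (Qop D₁ D₂) ∘ₗ (TensorProduct.assoc ℚ A A A).symm.toLinearMap := by
  refine ext3 fun a b c => ?_
  simp [Q12, Qop, E1, E2, TensorProduct.sub_tmul, TensorProduct.tmul_sub]

lemma Q12_pow_apply (m : ℕ) (a b c : A) :
    (Q12 D₁ D₂ ^ m) (a ⊗ₜ[ℚ] (b ⊗ₜ[ℚ] c))
      = (TensorProduct.assoc ℚ A A A) (((Qop D₁ D₂ ^ m) (a ⊗ₜ[ℚ] b)) ⊗ₜ[ℚ] c) := by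
  induction m with
  | zero => simp
  | succ k ih =>
    rw [pow_succ', Module.End.mul_apply, ih, Q12_conj, pow_succ', Module.End.mul_apply]
    simp

lemma Q23_pow_apply (m : ℕ) (a b c : A) :
    (Q23 D₁ D₂ ^ m) (a ⊗ₜ[ℚ] (b ⊗ₜ[ℚ] c)) = a ⊗ₜ[ℚ] ((Qop D₁ D₂ ^ m) (b ⊗ₜ[ℚ] c)) := by
  rw [Q23, lTensor_pow, lTensor_tmul]

lemma Psi_Q12_pow (m : ℕ) (a b c : A) :
    Psi ((Q12 D₁ D₂ ^ m) (a ⊗ₜ[ℚ] (b ⊗ₜ[ℚ] c)))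
      = (LinearMap.mul' ℚ A ((Qop D₁ D₂ ^ m) (a ⊗ₜ[ℚ] b))) ⊗ₜ[ℚ] c := by
  rw [Q12_pow_apply, Psi]
  simp

lemma Phi_Q23_pow (m : ℕ) (a b c : A) :
    Phi ((Q23 D₁ D₂ ^ m) (a ⊗ₜ[ℚ] (b ⊗ₜ[ℚ] c)))
      = a ⊗ₜ[ℚ] (LinearMap.mul' ℚ A ((Qop D₁ D₂ ^ m) (b ⊗ₜ[ℚ] c))) := by
  rw [Q23_pow_apply, Phi, lTensor_tmul]

end

lemma iter_comm (D₁ D₂ : Derivation ℚ A A) (hcomm : ∀ a : A, D₁ (D₂ a) = D₂ (D₁ a))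
    (i j : ℕ) (a : A) :
    (⇑D₁)^[i] ((⇑D₂)^[j] a) = (⇑D₂)^[j] ((⇑D₁)^[i] a) := by
  have h : Function.Commute ⇑D₁ ⇑D₂ := fun a => hcomm a
  exact (h.iterate_iterate i j) a

lemma commuteXY (D₁ D₂ : Derivation ℚ A A) (hcomm : ∀ a : A, D₁ (D₂ a) = D₂ (D₁ a)) :
    Commute (TensorProduct.map D₁.toLinearMap D₂.toLinearMap)
      (TensorProduct.map D₂.toLinearMap D₁.toLinearMap) := by
  unfold Commute SemiconjBy
  rw [Module.End.mul_eq_comp, Module.End.mul_eq_comp, ← TensorProduct.map_comp,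
    ← TensorProduct.map_comp, d_comm' D₁ D₂ hcomm]

lemma pow_iter (D : Derivation ℚ A A) (k : ℕ) (a : A) :
    (D.toLinearMap ^ k) a = (⇑D)^[k] a := by
  rw [Module.End.pow_apply]; rfl

lemma moyalTerm_eq (D₁ D₂ : Derivation ℚ A A) (hcomm : ∀ a : A, D₁ (D₂ a) = D₂ (D₁ a))
    (m : ℕ) (a b : A) :
    moyalTerm D₁ D₂ m a b
      = ((2 ^ m * m.factorial : ℚ))⁻¹ •
        LinearMap.mul' ℚ A ((Qop D₁ D₂ ^ m) (a ⊗ₜ[ℚ] b)) := by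
  unfold moyalTerm
  set X := TensorProduct.map D₁.toLinearMap D₂.toLinearMap with hX
  set Y := TensorProduct.map D₂.toLinearMap D₁.toLinearMap with hY
  have hQ : Qop D₁ D₂ ^ m
      = ∑ k ∈ Finset.range (m + 1),
          (((-1 : ℚ) ^ (m - k) * (m.choose k)) • (X ^ k * Y ^ (m - k))) := by
    rw [Qop, sub_eq_add_neg, ← hX, ← hY, ((commuteXY D₁ D₂ hcomm).neg_right).add_pow]
    refine Finset.sum_congr rfl fun k _ => ?_
    have hneg : (-Y) ^ (m - k) = ((-1 : ℚ) ^ (m - k)) • Y ^ (m - k) := by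
      rw [← neg_one_smul ℚ Y, smul_pow]
    rw [hneg, mul_smul_comm, smul_mul_assoc,
      (Nat.cast_commute (m.choose k) (X ^ k * Y ^ (m - k))).symm.eq, ← nsmul_eq_mul,
      ← Nat.cast_smul_eq_nsmul ℚ, smul_smul]
  rw [hQ, LinearMap.sum_apply, map_sum, Finset.smul_sum,
    Finset.Nat.sum_antidiagonal_eq_sum_range_succ_mk]
  refine Finset.sum_congr rfl fun k hk => ?_
  rw [Finset.mem_range, Nat.lt_succ_iff] at hk
  have happ : (X ^ k * Y ^ (m - k)) (a ⊗ₜ[ℚ] b)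
      = ((⇑D₁)^[k] ((⇑D₂)^[m-k] a)) ⊗ₜ[ℚ] ((⇑D₂)^[k] ((⇑D₁)^[m-k] b)) := by
    rw [Module.End.mul_apply, hX, hY, TensorProduct.map_pow, TensorProduct.map_pow,
      TensorProduct.map_tmul, TensorProduct.map_tmul, pow_iter, pow_iter, pow_iter, pow_iter]
  rw [LinearMap.smul_apply, happ, map_smul, LinearMap.mul'_apply, smul_smul]
  rw [iter_comm D₁ D₂ hcomm (m - k) k b]
  congr 1
  have h2 : (k.factorial : ℚ) ≠ 0 := Nat.cast_ne_zero.mpr (Nat.factorial_ne_zero _)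
  have h3 : ((m - k).factorial : ℚ) ≠ 0 := Nat.cast_ne_zero.mpr (Nat.factorial_ne_zero _)
  have h1 : (m.factorial : ℚ) ≠ 0 := Nat.cast_ne_zero.mpr (Nat.factorial_ne_zero _)
  rw [Nat.cast_choose ℚ hk]
  field_simp


lemma binom_smul_end {M : Type*} [AddCommGroup M] [Module ℚ M] {u v : M →ₗ[ℚ] M}
    (huv : Commute u v) (N : ℕ) :
    ∑ mn ∈ antidiagonal N, (((mn.1.factorial : ℚ) * mn.2.factorial)⁻¹ • (v ^ mn.2 * u ^ mn.1))
      = ((N.factorial : ℚ))⁻¹ • (u + v) ^ N := binom_smul huv N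

section
variable (D₁ D₂ : Derivation ℚ A A)

lemma moyal_key (hcomm : ∀ a : A, D₁ (D₂ a) = D₂ (D₁ a)) (N : ℕ) (a b c : A) :
    ∑ mn ∈ antidiagonal N, moyalTerm D₁ D₂ mn.2 (moyalTerm D₁ D₂ mn.1 a b) c
      = ∑ mn ∈ antidiagonal N, moyalTerm D₁ D₂ mn.2 a (moyalTerm D₁ D₂ mn.1 b c) := by
  set x : A ⊗[ℚ] (A ⊗[ℚ] A) := a ⊗ₜ[ℚ] (b ⊗ₜ[ℚ] c) with hx
  have hscal : ∀ m n : ℕ, m + n = N → ((2:ℚ) ^ n * n.factorial)⁻¹ * ((2:ℚ) ^ m * m.factorial)⁻¹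
      = ((2:ℚ) ^ N)⁻¹ * ((m.factorial : ℚ) * n.factorial)⁻¹ := by
    intro m n hmn
    have h2 : ((2:ℚ) ^ m) * 2 ^ n = 2 ^ N := by rw [← pow_add, hmn]
    rw [← mul_inv, ← mul_inv]
    congr 1
    rw [← h2]; ring
  have hL : ∀ m n : ℕ, m + n = N →
      moyalTerm D₁ D₂ n (moyalTerm D₁ D₂ m a b) c
        = ((2:ℚ) ^ N)⁻¹ • (((m.factorial : ℚ) * n.factorial)⁻¹ •
            (LinearMap.mul' ℚ A ∘ₗ Psi)
              ((((Q13 D₁ D₂ + Q23 D₁ D₂) ^ n) * (Q12 D₁ D₂ ^ m)) x)) := by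
    intro m n hmn
    rw [moyalTerm_eq D₁ D₂ hcomm n, moyalTerm_eq D₁ D₂ hcomm m, ← TensorProduct.smul_tmul',
      map_smul, map_smul, ← Psi_Q12_pow D₁ D₂ m a b c]
    have hcp := comp_pow (Qop D₁ D₂) (Q13 D₁ D₂ + Q23 D₁ D₂) Psi (leibPsi D₁ D₂) n
    have happ : (Qop D₁ D₂ ^ n) (Psi ((Q12 D₁ D₂ ^ m) x))
        = Psi (((Q13 D₁ D₂ + Q23 D₁ D₂) ^ n) ((Q12 D₁ D₂ ^ m) x)) := by
      have h5 := congrArg (fun F : A ⊗[ℚ] (A ⊗[ℚ] A) →ₗ[ℚ] A ⊗[ℚ] A =>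
        F ((Q12 D₁ D₂ ^ m) x)) hcp
      simpa using h5
    rw [hx, happ, ← Module.End.mul_apply, smul_smul, hscal m n hmn, ← smul_smul,
      LinearMap.comp_apply]
  have hR : ∀ m n : ℕ, m + n = N →
      moyalTerm D₁ D₂ n a (moyalTerm D₁ D₂ m b c)
        = ((2:ℚ) ^ N)⁻¹ • (((m.factorial : ℚ) * n.factorial)⁻¹ •
            (LinearMap.mul' ℚ A ∘ₗ Phi)
              ((((Q12 D₁ D₂ + Q13 D₁ D₂) ^ n) * (Q23 D₁ D₂ ^ m)) x)) := by
    intro m n hmn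
    rw [moyalTerm_eq D₁ D₂ hcomm n, moyalTerm_eq D₁ D₂ hcomm m, TensorProduct.tmul_smul,
      map_smul, map_smul, ← Phi_Q23_pow D₁ D₂ m a b c]
    have hcp := comp_pow (Qop D₁ D₂) (Q12 D₁ D₂ + Q13 D₁ D₂) Phi (leibPhi D₁ D₂) n
    have happ : (Qop D₁ D₂ ^ n) (Phi ((Q23 D₁ D₂ ^ m) x))
        = Phi (((Q12 D₁ D₂ + Q13 D₁ D₂) ^ n) ((Q23 D₁ D₂ ^ m) x)) := by
      have h5 := congrArg (fun F : A ⊗[ℚ] (A ⊗[ℚ] A) →ₗ[ℚ] A ⊗[ℚ] A =>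
        F ((Q23 D₁ D₂ ^ m) x)) hcp
      simpa using h5
    rw [hx, happ, ← Module.End.mul_apply, smul_smul, hscal m n hmn, ← smul_smul,
      LinearMap.comp_apply]
  have collect : ∀ (F : A ⊗[ℚ] (A ⊗[ℚ] A) →ₗ[ℚ] A)
      (op : ℕ × ℕ → (A ⊗[ℚ] (A ⊗[ℚ] A) →ₗ[ℚ] A ⊗[ℚ] (A ⊗[ℚ] A))),
      ∑ mn ∈ antidiagonal N, ((mn.1.factorial : ℚ) * mn.2.factorial)⁻¹ • F (op mn x)
        = F ((∑ mn ∈ antidiagonal N,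
            ((mn.1.factorial : ℚ) * mn.2.factorial)⁻¹ • op mn) x) := by
    intro F op
    rw [LinearMap.sum_apply, map_sum]
    exact Finset.sum_congr rfl fun mn _ => by rw [LinearMap.smul_apply, map_smul]
  calc ∑ mn ∈ antidiagonal N, moyalTerm D₁ D₂ mn.2 (moyalTerm D₁ D₂ mn.1 a b) c
      = ∑ mn ∈ antidiagonal N, ((2:ℚ) ^ N)⁻¹ • (((mn.1.factorial : ℚ) * mn.2.factorial)⁻¹ •
          (LinearMap.mul' ℚ A ∘ₗ Psi)
            ((((Q13 D₁ D₂ + Q23 D₁ D₂) ^ mn.2) * (Q12 D₁ D₂ ^ mn.1)) x)) :=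
        Finset.sum_congr rfl fun mn hmn => hL mn.1 mn.2 (Finset.HasAntidiagonal.mem_antidiagonal.mp hmn)
    _ = ((2:ℚ) ^ N)⁻¹ • (LinearMap.mul' ℚ A ∘ₗ Psi)
          ((∑ mn ∈ antidiagonal N, ((mn.1.factorial : ℚ) * mn.2.factorial)⁻¹ •
            (((Q13 D₁ D₂ + Q23 D₁ D₂) ^ mn.2) * (Q12 D₁ D₂ ^ mn.1))) x) := by
        rw [← Finset.smul_sum, collect]
    _ = ((2:ℚ) ^ N)⁻¹ • (LinearMap.mul' ℚ A ∘ₗ Psi)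
          ((((N.factorial : ℚ))⁻¹ • (Q12 D₁ D₂ + (Q13 D₁ D₂ + Q23 D₁ D₂)) ^ N) x) := by
        rw [binom_smul_end ((commQ1213 D₁ D₂ hcomm).add_right (commQ1223 D₁ D₂ hcomm)) N]
    _ = ((2:ℚ) ^ N)⁻¹ • (LinearMap.mul' ℚ A ∘ₗ Phi)
          ((((N.factorial : ℚ))⁻¹ • (Q23 D₁ D₂ + (Q12 D₁ D₂ + Q13 D₁ D₂)) ^ N) x) := by
        rw [muPsiPhi]
        congr 3
        abel
    _ = ((2:ℚ) ^ N)⁻¹ • (LinearMap.mul' ℚ A ∘ₗ Phi)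
          ((∑ mn ∈ antidiagonal N, ((mn.1.factorial : ℚ) * mn.2.factorial)⁻¹ •
            (((Q12 D₁ D₂ + Q13 D₁ D₂) ^ mn.2) * (Q23 D₁ D₂ ^ mn.1))) x) := by
        rw [binom_smul_end (((commQ1223 D₁ D₂ hcomm).symm).add_right
          ((commQ1323 D₁ D₂ hcomm).symm)) N]
    _ = ∑ mn ∈ antidiagonal N, ((2:ℚ) ^ N)⁻¹ • (((mn.1.factorial : ℚ) * mn.2.factorial)⁻¹ •
          (LinearMap.mul' ℚ A ∘ₗ Phi)
            ((((Q12 D₁ D₂ + Q13 D₁ D₂) ^ mn.2) * (Q23 D₁ D₂ ^ mn.1)) x)) := by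
        rw [← Finset.smul_sum, collect]
    _ = ∑ mn ∈ antidiagonal N, moyalTerm D₁ D₂ mn.2 a (moyalTerm D₁ D₂ mn.1 b c) :=
        Finset.sum_congr rfl fun mn hmn => (hR mn.1 mn.2 (Finset.HasAntidiagonal.mem_antidiagonal.mp hmn)).symm

end


abbrev I5 : Type := Σ _ : (Σ _ : ℕ × ℕ, ℕ × ℕ), (Σ _ : ℕ × ℕ, ℕ × ℕ)

lemma reindexL {M : Type*} [AddCommMonoid M] (N : ℕ) (F : ℕ → ℕ → ℕ → ℕ → ℕ → M) :
    (∑ x ∈ antidiagonal N, ∑ y ∈ antidiagonal x.1, ∑ z ∈ antidiagonal y.1,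
        ∑ w ∈ antidiagonal z.1, F w.1 w.2 y.2 z.2 x.2)
      = ∑ x ∈ antidiagonal N, ∑ y ∈ antidiagonal x.1, ∑ w ∈ antidiagonal y.1,
          ∑ s ∈ antidiagonal x.2, F w.1 w.2 y.2 s.1 s.2 := by
  have h1 : (∑ r ∈ (((antidiagonal N).sigma fun x => antidiagonal x.1).sigma
        fun p => (antidiagonal p.2.1).sigma fun z => antidiagonal z.1),
        F r.2.2.1 r.2.2.2 r.1.2.2 r.2.1.2 r.1.1.2)
      = ∑ x ∈ antidiagonal N, ∑ y ∈ antidiagonal x.1, ∑ z ∈ antidiagonal y.1,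
          ∑ w ∈ antidiagonal z.1, F w.1 w.2 y.2 z.2 x.2 := by
    simp only [Finset.sum_sigma]
  have h2 : (∑ r ∈ (((antidiagonal N).sigma fun x => antidiagonal x.1).sigma
        fun p => (antidiagonal p.2.1).sigma fun _ => antidiagonal p.1.2),
        F r.2.1.1 r.2.1.2 r.1.2.2 r.2.2.1 r.2.2.2)
      = ∑ x ∈ antidiagonal N, ∑ y ∈ antidiagonal x.1, ∑ w ∈ antidiagonal y.1,
          ∑ s ∈ antidiagonal x.2, F w.1 w.2 y.2 s.1 s.2 := by
    simp only [Finset.sum_sigma]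
  rw [← h1, ← h2]
  refine Finset.sum_nbij'
    (fun r => (⟨⟨(r.2.2.1 + r.2.2.2 + r.1.2.2, r.2.1.2 + r.1.1.2), (r.2.2.1 + r.2.2.2, r.1.2.2)⟩,
        ⟨(r.2.2.1, r.2.2.2), (r.2.1.2, r.1.1.2)⟩⟩ : I5))
    (fun r => (⟨⟨(r.2.1.1 + r.2.1.2 + r.2.2.1 + r.1.2.2, r.2.2.2),
          (r.2.1.1 + r.2.1.2 + r.2.2.1, r.1.2.2)⟩,
        ⟨(r.2.1.1 + r.2.1.2, r.2.2.1), (r.2.1.1, r.2.1.2)⟩⟩ : I5))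
    ?_ ?_ ?_ ?_ ?_
  all_goals
    rintro ⟨⟨⟨x1, x2⟩, ⟨y1, y2⟩⟩, ⟨⟨z1, z2⟩, ⟨w1, w2⟩⟩⟩ hr
    first
      | rfl
      | (simp only [Finset.mem_sigma, Finset.HasAntidiagonal.mem_antidiagonal, Sigma.ext_iff, Prod.ext_iff,
          heq_eq_eq, and_true, true_and] at hr ⊢; omega)

lemma reindexR {M : Type*} [AddCommMonoid M] (N : ℕ) (F : ℕ → ℕ → ℕ → ℕ → ℕ → M) :
    (∑ x ∈ antidiagonal N, ∑ y ∈ antidiagonal x.1, ∑ z ∈ antidiagonal y.2,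
        ∑ w ∈ antidiagonal z.1, F y.1 w.1 w.2 z.2 x.2)
      = ∑ x ∈ antidiagonal N, ∑ y ∈ antidiagonal x.1, ∑ w ∈ antidiagonal y.1,
          ∑ s ∈ antidiagonal x.2, F w.1 w.2 y.2 s.1 s.2 := by
  have h1 : (∑ r ∈ (((antidiagonal N).sigma fun x => antidiagonal x.1).sigma
        fun p => (antidiagonal p.2.2).sigma fun z => antidiagonal z.1),
        F r.1.2.1 r.2.2.1 r.2.2.2 r.2.1.2 r.1.1.2)
      = ∑ x ∈ antidiagonal N, ∑ y ∈ antidiagonal x.1, ∑ z ∈ antidiagonal y.2,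
          ∑ w ∈ antidiagonal z.1, F y.1 w.1 w.2 z.2 x.2 := by
    simp only [Finset.sum_sigma]
  have h2 : (∑ r ∈ (((antidiagonal N).sigma fun x => antidiagonal x.1).sigma
        fun p => (antidiagonal p.2.1).sigma fun _ => antidiagonal p.1.2),
        F r.2.1.1 r.2.1.2 r.1.2.2 r.2.2.1 r.2.2.2)
      = ∑ x ∈ antidiagonal N, ∑ y ∈ antidiagonal x.1, ∑ w ∈ antidiagonal y.1,
          ∑ s ∈ antidiagonal x.2, F w.1 w.2 y.2 s.1 s.2 := by
    simp only [Finset.sum_sigma]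
  rw [← h1, ← h2]
  refine Finset.sum_nbij'
    (fun r => (⟨⟨(r.1.2.1 + r.2.2.1 + r.2.2.2, r.2.1.2 + r.1.1.2), (r.1.2.1 + r.2.2.1, r.2.2.2)⟩,
        ⟨(r.1.2.1, r.2.2.1), (r.2.1.2, r.1.1.2)⟩⟩ : I5))
    (fun r => (⟨⟨(r.2.1.1 + r.2.1.2 + r.1.2.2 + r.2.2.1, r.2.2.2),
          (r.2.1.1, r.2.1.2 + r.1.2.2 + r.2.2.1)⟩,
        ⟨(r.2.1.2 + r.1.2.2, r.2.2.1), (r.2.1.2, r.1.2.2)⟩⟩ : I5))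
    ?_ ?_ ?_ ?_ ?_
  all_goals
    rintro ⟨⟨⟨x1, x2⟩, ⟨y1, y2⟩⟩, ⟨⟨z1, z2⟩, ⟨w1, w2⟩⟩⟩ hr
    first
      | rfl
      | (simp only [Finset.mem_sigma, Finset.HasAntidiagonal.mem_antidiagonal, Sigma.ext_iff, Prod.ext_iff,
          heq_eq_eq, and_true, true_and] at hr ⊢; omega)

section
variable {A : Type*} [CommRing A] [Algebra ℚ A] (D₁ D₂ : Derivation ℚ A A)

lemma moyalTerm_sum_left {ι : Type*} (m : ℕ) (s : Finset ι) (F : ι → A) (c : A) :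
    moyalTerm D₁ D₂ m (∑ i ∈ s, F i) c = ∑ i ∈ s, moyalTerm D₁ D₂ m (F i) c := by
  unfold moyalTerm
  rw [Finset.sum_comm]
  refine Finset.sum_congr rfl fun k _ => ?_
  have e1 : ∀ y : A, (⇑D₁)^[k.1] y = (D₁.toLinearMap ^ k.1) y := fun y => (pow_iter D₁ k.1 y).symm
  have e2 : ∀ y : A, (⇑D₂)^[k.2] y = (D₂.toLinearMap ^ k.2) y := fun y => (pow_iter D₂ k.2 y).symm
  simp only [e1, e2, map_sum]
  rw [Finset.sum_mul, Finset.smul_sum]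

lemma moyalTerm_sum_right {ι : Type*} (m : ℕ) (s : Finset ι) (F : ι → A) (c : A) :
    moyalTerm D₁ D₂ m c (∑ i ∈ s, F i) = ∑ i ∈ s, moyalTerm D₁ D₂ m c (F i) := by
  unfold moyalTerm
  rw [Finset.sum_comm]
  refine Finset.sum_congr rfl fun k _ => ?_
  have e1 : ∀ j : ℕ, ∀ y : A, (⇑D₁)^[j] y = (D₁.toLinearMap ^ j) y :=
    fun j y => (pow_iter D₁ j y).symm
  have e2 : ∀ j : ℕ, ∀ y : A, (⇑D₂)^[j] y = (D₂.toLinearMap ^ j) y :=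
    fun j y => (pow_iter D₂ j y).symm
  simp only [e1, e2, map_sum]
  rw [Finset.mul_sum, Finset.smul_sum]

lemma coeff_moyalStar (f g : PowerSeries A) (n : ℕ) :
    PowerSeries.coeff (R := A) n (moyalStar D₁ D₂ f g)
      = ∑ am ∈ antidiagonal n, ∑ pq ∈ antidiagonal am.1,
          moyalTerm D₁ D₂ am.2 (PowerSeries.coeff (R := A) pq.1 f) (PowerSeries.coeff (R := A) pq.2 g) := by
  unfold moyalStar
  rw [PowerSeries.coeff_mk]

end

end MoyalAssocAux

/-- The Moyal star product built from two commuting derivations is associative. -/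
theorem moyalStar_assoc {A : Type*} [CommRing A] [Algebra ℚ A]
    (D₁ D₂ : Derivation ℚ A A) (hcomm : ∀ a : A, D₁ (D₂ a) = D₂ (D₁ a))
    (f g h : PowerSeries A) :
    moyalStar D₁ D₂ (moyalStar D₁ D₂ f g) h = moyalStar D₁ D₂ f (moyalStar D₁ D₂ g h) := by
  open MoyalAssocAux in
  ext N
  calc PowerSeries.coeff (R := A) N (moyalStar D₁ D₂ (moyalStar D₁ D₂ f g) h)
      = ∑ x ∈ antidiagonal N, ∑ y ∈ antidiagonal x.1,
          moyalTerm D₁ D₂ x.2 (PowerSeries.coeff (R := A) y.1 (moyalStar D₁ D₂ f g))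
            (PowerSeries.coeff (R := A) y.2 h) := coeff_moyalStar D₁ D₂ _ _ N
    _ = ∑ x ∈ antidiagonal N, ∑ y ∈ antidiagonal x.1, ∑ z ∈ antidiagonal y.1,
          ∑ w ∈ antidiagonal z.1,
            moyalTerm D₁ D₂ x.2
              (moyalTerm D₁ D₂ z.2 (PowerSeries.coeff (R := A) w.1 f) (PowerSeries.coeff (R := A) w.2 g))
              (PowerSeries.coeff (R := A) y.2 h) := by
        refine Finset.sum_congr rfl fun x _ => Finset.sum_congr rfl fun y _ => ?_
        rw [coeff_moyalStar, moyalTerm_sum_left]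
        exact Finset.sum_congr rfl fun z _ => moyalTerm_sum_left D₁ D₂ _ _ _ _
    _ = ∑ x ∈ antidiagonal N, ∑ y ∈ antidiagonal x.1, ∑ w ∈ antidiagonal y.1,
          ∑ s ∈ antidiagonal x.2,
            moyalTerm D₁ D₂ s.2
              (moyalTerm D₁ D₂ s.1 (PowerSeries.coeff (R := A) w.1 f) (PowerSeries.coeff (R := A) w.2 g))
              (PowerSeries.coeff (R := A) y.2 h) :=
        reindexL N fun p q r m n => moyalTerm D₁ D₂ n
          (moyalTerm D₁ D₂ m (PowerSeries.coeff (R := A) p f) (PowerSeries.coeff (R := A) q g))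
          (PowerSeries.coeff (R := A) r h)
    _ = ∑ x ∈ antidiagonal N, ∑ y ∈ antidiagonal x.1, ∑ w ∈ antidiagonal y.1,
          ∑ s ∈ antidiagonal x.2,
            moyalTerm D₁ D₂ s.2 (PowerSeries.coeff (R := A) w.1 f)
              (moyalTerm D₁ D₂ s.1 (PowerSeries.coeff (R := A) w.2 g) (PowerSeries.coeff (R := A) y.2 h)) :=
        Finset.sum_congr rfl fun x _ => Finset.sum_congr rfl fun y _ =>
          Finset.sum_congr rfl fun w _ => moyal_key D₁ D₂ hcomm x.2 _ _ _
    _ = ∑ x ∈ antidiagonal N, ∑ y ∈ antidiagonal x.1, ∑ z ∈ antidiagonal y.2,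
          ∑ w ∈ antidiagonal z.1,
            moyalTerm D₁ D₂ x.2 (PowerSeries.coeff (R := A) y.1 f)
              (moyalTerm D₁ D₂ z.2 (PowerSeries.coeff (R := A) w.1 g) (PowerSeries.coeff (R := A) w.2 h)) :=
        (reindexR N fun p q r m n => moyalTerm D₁ D₂ n (PowerSeries.coeff (R := A) p f)
          (moyalTerm D₁ D₂ m (PowerSeries.coeff (R := A) q g) (PowerSeries.coeff (R := A) r h))).symm
    _ = ∑ x ∈ antidiagonal N, ∑ y ∈ antidiagonal x.1,
          moyalTerm D₁ D₂ x.2 (PowerSeries.coeff (R := A) y.1 f)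
            (PowerSeries.coeff (R := A) y.2 (moyalStar D₁ D₂ g h)) := by
        refine Finset.sum_congr rfl fun x _ => Finset.sum_congr rfl fun y _ => ?_
        rw [coeff_moyalStar, moyalTerm_sum_right]
        exact (Finset.sum_congr rfl fun z _ => moyalTerm_sum_right D₁ D₂ _ _ _ _).symm
    _ = PowerSeries.coeff (R := A) N (moyalStar D₁ D₂ f (moyalStar D₁ D₂ g h)) :=
        (coeff_moyalStar D₁ D₂ _ _ N).symm
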